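/- E₃ is not Borel reducible to ℓ∞. -/

import Mathlib

/-- Borel reducibility: a Borel-measurable map `θ` with `E x x' ↔ F (θ x) (θ x')`. -/
def BorelReducible {X Y : Type*} [TopologicalSpace X] [TopologicalSpace Y]
    (E : X → X → Prop) (F : Y → Y → Prop) : Prop :=
  ∃ θ : X → Y, @Measurable X Y (borel X) (borel Y) θ ∧
    ∀ x x' : X, E x x' ↔ F (θ x) (θ x')

/-- `E₃`: componentwise eventual equality on `(2^ℕ)^ℕ`. -/
def E3 (x y : ℕ → ℕ → Bool) : Prop := ∀ k : ℕ, {n : ℕ | x k n ≠ y k n}.Finite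

/-- The `ℓ∞` equivalence relation on `ℝ^ℕ`: `x ∼ y` iff the differences are bounded. -/
def linftyRel (x y : ℕ → ℝ) : Prop := ∃ C : ℝ, ∀ n : ℕ, |x n - y n| ≤ C



namespace E3L

open Set Filter Topology


abbrev XS : Type := ℕ → ℕ → Bool
abbrev GS : Type := ℕ → ℕ
abbrev ZS : Type := ℕ → Bool

/-- bit-flip action of a code `g` on `x` -/
def act (g : GS) (x : XS) : XS := fun k n => xor ((g k).testBit n) (x k n)

def single (c K : ℕ) : GS := fun k => if k = K then c else 0

def actZ (K : ℕ) (z : ZS) (x : XS) : XS :=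
  fun k n => if k = K then xor (z n) (x k n) else x k n

lemma act_act (g : GS) (x : XS) : act g (act g x) = x := by
  funext k n; simp [act]

lemma act_invol (g : GS) : Function.Involutive (act g) := act_act g

lemma actZ_invol (K : ℕ) (z : ZS) : Function.Involutive (actZ K z) := by
  intro x; funext k n; by_cases h : k = K <;> simp [actZ, h]

lemma act_xor (g h : GS) (x : XS) :
    act (fun k => g k ^^^ h k) x = act h (act g x) := by
  funext k n
  simp [act, Nat.testBit_xor]
  cases (g k).testBit n <;> cases (h k).testBit n <;> cases x k n <;> rfl

lemma testBit_finite (c : ℕ) : {n : ℕ | c.testBit n = true}.Finite := by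
  apply (Set.finite_Iio (c+1)).subset
  intro n hn
  simp only [mem_setOf_eq] at hn
  by_contra h
  simp only [Set.mem_Iio, not_lt] at h
  have : c < 2 ^ n := lt_of_lt_of_le (Nat.lt_succ_self c) (le_trans (Nat.succ_le_of_lt (Nat.lt_two_pow_self (n := c))) (Nat.pow_le_pow_right (by norm_num) (by omega)))
  rw [Nat.testBit_lt_two_pow this] at hn
  exact Bool.false_ne_true hn

lemma E3_act (g : GS) (x : XS) : E3 x (act g x) := by
  intro k
  apply (testBit_finite (g k)).subset
  intro n hn
  simp only [mem_setOf_eq, act] at hn ⊢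
  cases h : (g k).testBit n
  · simp [h] at hn
  · rfl

lemma exists_code (w : ZS) (N : ℕ) :
    ∃ c : ℕ, ∀ n, c.testBit n = (w n && decide (n < N)) := by
  induction N with
  | zero => exact ⟨0, fun n => by simp⟩
  | succ N ih =>
    obtain ⟨c, hc⟩ := ih
    refine ⟨if w N then c ^^^ 2 ^ N else c, fun n => ?_⟩
    by_cases hw : w N
    · simp only [hw, if_true, Nat.testBit_xor, hc, Nat.testBit_two_pow]
      by_cases hn : n = N
      · subst hn; simp [hw]
      · rcases Nat.lt_or_ge n N with h | h
        · simp [hn, Ne.symm hn, h, Nat.lt_succ_of_lt h]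
        · have : ¬ n < N := not_lt.2 h
          have h2 : ¬ n < N + 1 := by omega
          simp [hn, Ne.symm hn, this, h2]
    · simp only [hw, if_false, hc]
      have hwn : w N = false := by simpa using hw
      by_cases hn : n = N
      · subst hn; simp [hc, hwn]
      · rcases Nat.lt_or_ge n N with h | h
        · simp [hc, h, Nat.lt_succ_of_lt h]
        · have : ¬ n < N := not_lt.2 h
          have h2 : ¬ n < N + 1 := by omega
          simp [hc, this, h2]



/-! ### continuity of the actions -/

lemma continuous_act_pair : Continuous fun p : XS × GS => act p.2 p.1 := by
  apply continuous_pi; intro k; apply continuous_pi; intro n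
  have h1 : Continuous fun p : XS × GS => (p.2 k).testBit n :=
    (continuous_of_discreteTopology (α := ℕ) (f := fun m : ℕ => m.testBit n)).comp
      ((continuous_apply k).comp continuous_snd)
  have h2 : Continuous fun p : XS × GS => p.1 k n :=
    ((continuous_apply n).comp ((continuous_apply k).comp continuous_fst))
  exact (continuous_of_discreteTopology (α := Bool × Bool) (f := fun q => xor q.1 q.2)).comp
    (h1.prodMk h2)

lemma continuous_act (g : GS) : Continuous (act g) := by
  exact continuous_act_pair.comp (continuous_id.prodMk continuous_const)

lemma continuous_actZ_pair (K : ℕ) : Continuous fun p : XS × ZS => actZ K p.2 p.1 := by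
  apply continuous_pi; intro k; apply continuous_pi; intro n
  by_cases h : k = K
  · subst h
    have h1 : Continuous fun p : XS × ZS => p.2 n := (continuous_apply n).comp continuous_snd
    have h2 : Continuous fun p : XS × ZS => p.1 k n :=
      ((continuous_apply n).comp ((continuous_apply k).comp continuous_fst))
    have : Continuous fun p : XS × ZS => xor (p.2 n) (p.1 k n) :=
      (continuous_of_discreteTopology (α := Bool × Bool) (f := fun q => xor q.1 q.2)).comp
        (h1.prodMk h2)
    simpa [actZ] using this
  · have h2 : Continuous fun p : XS × ZS => p.1 k n :=
      ((continuous_apply n).comp ((continuous_apply k).comp continuous_fst))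
    simpa [actZ, h] using h2

lemma continuous_actZ (K : ℕ) (z : ZS) : Continuous (actZ K z) := by
  exact (continuous_actZ_pair K).comp (continuous_id.prodMk continuous_const)

/-! ### comeager-in-an-open-set machinery -/

variable {α β : Type*} [TopologicalSpace α] [TopologicalSpace β]

/-- `s` is comeager in `W`. -/
def CmgIn (s W : Set α) : Prop := Wᶜ ∪ s ∈ residual α

lemma CmgIn.mono {s t W : Set α} (h : CmgIn s W) (hst : s ⊆ t) : CmgIn t W :=
  Filter.mem_of_superset h (union_subset_union_right _ hst)

lemma CmgIn.subset_open {s W W' : Set α} (h : CmgIn s W) (hW : W' ⊆ W) : CmgIn s W' :=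
  Filter.mem_of_superset h (union_subset_union_left _ (compl_subset_compl.2 hW))

lemma CmgIn.of_residual {s : Set α} (h : s ∈ residual α) (W : Set α) : CmgIn s W :=
  Filter.mem_of_superset h subset_union_right

lemma CmgIn.inter {s t W : Set α} (hs : CmgIn s W) (ht : CmgIn t W) : CmgIn (s ∩ t) W := by
  have := Filter.inter_mem hs ht
  rwa [← union_inter_distrib_left] at this

lemma CmgIn.iInter {ι : Sort*} [Countable ι] {s : ι → Set α} {W : Set α}
    (h : ∀ i, CmgIn (s i) W) : CmgIn (⋂ i, s i) W := by
  have : (⋂ i, Wᶜ ∪ s i) ∈ residual α := (countable_iInter_mem).2 h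
  rwa [← union_iInter] at this

lemma CmgIn.nonempty [BaireSpace α] {s W : Set α} (h : CmgIn s W) (hW : IsOpen W)
    (hne : W.Nonempty) : (s ∩ W).Nonempty := by
  have hd : Dense (Wᶜ ∪ s) := dense_of_mem_residual h
  obtain ⟨p, hp⟩ := hne
  obtain ⟨q, hq1, hq2⟩ := hd.exists_mem_open hW ⟨p, hp⟩
  rcases hq1 with hq | hq
  · exact absurd hq2 hq
  · exact ⟨q, hq, hq2⟩

lemma CmgIn.preimage {f : α → β} (hc : Continuous f) (ho : IsOpenMap f)
    {s W : Set β} {W' : Set α} (h : CmgIn s W) (hW : f ⁻¹' W = W') :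
    CmgIn (f ⁻¹' s) W' := by
  have := tendsto_residual_of_isOpenMap hc ho h
  rw [Filter.mem_map, Set.preimage_union, Set.preimage_compl, hW] at this
  exact this

/-- From a non-meager Baire-measurable set: comeager in some nonempty open set. -/
lemma nonmeager_cmgIn {s : Set α} (hbm : BaireMeasurableSet s) (hnm : ¬ IsMeagre s) :
    ∃ u : Set α, IsOpen u ∧ u.Nonempty ∧ CmgIn s u := by
  obtain ⟨u, uo, hequ⟩ := hbm.residualEq_isOpen
  have hE : {x | (x ∈ s) = (x ∈ u)} ∈ residual α := hequ
  refine ⟨u, uo, ?_, ?_⟩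
  · rcases eq_empty_or_nonempty u with rfl | hne
    · exfalso
      apply hnm
      apply Filter.mem_of_superset hE
      intro x hx
      simp only [mem_setOf_eq, mem_empty_iff_false, eq_iff_iff, iff_false] at hx
      exact hx
    · exact hne
  · apply Filter.mem_of_superset hE
    intro x hx
    simp only [mem_setOf_eq, eq_iff_iff] at hx
    by_cases hxu : x ∈ u
    · exact Or.inr (hx.2 hxu)
    · exact Or.inl hxu



open TopologicalSpace

/-! ### cylinder lemmas -/

lemma cylG {v : Set GS} (hv : IsOpen v) {q : GS} (hq : q ∈ v) :
    ∃ Kf : Finset ℕ, {g : GS | ∀ k ∈ Kf, g k = q k} ⊆ v := by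
  obtain ⟨I, u, hu, hsub⟩ := (isOpen_pi_iff.1 hv) q hq
  refine ⟨I, fun g hg => hsub ?_⟩
  intro k hk
  rw [hg k hk]
  exact (hu k hk).2

lemma cylX {u : Set XS} (hu : IsOpen u) {p : XS} (hp : p ∈ u) :
    ∃ (I : Finset ℕ) (J : ℕ → Finset ℕ),
      {x : XS | ∀ k ∈ I, ∀ n ∈ J k, x k n = p k n} ⊆ u := by
  obtain ⟨I, v, hv, hsub⟩ := (isOpen_pi_iff.1 hu) p hp
  have hchoice : ∀ k : ℕ, ∃ Jk : Finset ℕ, k ∈ I →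
      {y : ℕ → Bool | ∀ n ∈ Jk, y n = p k n} ⊆ v k := by
    intro k
    by_cases hk : k ∈ I
    · obtain ⟨Jk, w, hw, hsubk⟩ := (isOpen_pi_iff.1 (hv k hk).1) (p k) (hv k hk).2
      refine ⟨Jk, fun _ y hy => hsubk ?_⟩
      intro n hn
      rw [hy n hn]
      exact (hw n hn).2
    · exact ⟨∅, fun h => absurd h hk⟩
  choose J hJ using hchoice
  refine ⟨I, J, fun x hx => hsub ?_⟩
  intro k hk
  apply hJ k hk
  intro n hn
  exact hx k hk n hn

lemma isOpen_cylX (p : XS) (I : Finset ℕ) (J : ℕ → Finset ℕ) :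
    IsOpen {x : XS | ∀ k ∈ I, ∀ n ∈ J k, x k n = p k n} := by
  have : {x : XS | ∀ k ∈ I, ∀ n ∈ J k, x k n = p k n}
      = ⋂ k ∈ I, ⋂ n ∈ J k, {x : XS | x k n = p k n} := by
    ext x; simp
  rw [this]
  apply isOpen_biInter_finset
  intro k _
  apply isOpen_biInter_finset
  intro n _
  have hc : Continuous fun x : XS => x k n :=
    (continuous_apply n).comp (continuous_apply k)
  exact IsOpen.preimage hc (isOpen_discrete ({p k n} : Set Bool))

lemma isOpen_cylG (q : GS) (Kf : Finset ℕ) :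
    IsOpen {g : GS | ∀ k ∈ Kf, g k = q k} := by
  have : {g : GS | ∀ k ∈ Kf, g k = q k} = ⋂ k ∈ Kf, {g : GS | g k = q k} := by
    ext g; simp
  rw [this]
  apply isOpen_biInter_finset
  intro k _
  have hc : Continuous fun g : GS => g k := continuous_apply k
  exact IsOpen.preimage hc (isOpen_discrete ({q k} : Set ℕ))

/-! ### infinite support is residual in `ZS` -/

lemma residual_infinite_support :
    {z : ZS | {n : ℕ | z n = true}.Infinite} ∈ residual ZS := by
  have key : IsMeagre {z : ZS | ¬ {n : ℕ | z n = true}.Infinite} := by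
    have hsub : {z : ZS | ¬ {n : ℕ | z n = true}.Infinite}
        ⊆ ⋃ N : ℕ, {z : ZS | ∀ n, N ≤ n → z n = false} := by
      intro z hz
      simp only [mem_setOf_eq, Set.not_infinite] at hz
      obtain ⟨N, hN⟩ := hz.bddAbove
      simp only [mem_iUnion, mem_setOf_eq]
      refine ⟨N + 1, fun n hn => ?_⟩
      by_contra h
      have hz : z n = true := by simpa using h
      have := hN (show n ∈ {m : ℕ | z m = true} from hz)
      omega
    apply IsMeagre.mono hsub
    apply isMeagre_iUnion
    intro N
    have hcl : IsClosed {z : ZS | ∀ n, N ≤ n → z n = false} := by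
      have : {z : ZS | ∀ n, N ≤ n → z n = false}
          = ⋂ n, ⋂ (_ : N ≤ n), {z : ZS | z n = false} := by ext z; simp
      rw [this]
      exact isClosed_iInter fun n => isClosed_iInter fun _ =>
        (by
          have hc : Continuous fun z : ZS => z n := continuous_apply n
          exact IsClosed.preimage hc (isClosed_discrete ({false} : Set Bool)))
    have hdense : Dense {z : ZS | ∀ n, N ≤ n → z n = false}ᶜ := by
      rw [dense_iff_inter_open]
      rintro U hU ⟨z, hz⟩
      obtain ⟨I, v, hv, hsub⟩ := (isOpen_pi_iff.1 hU) z hz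
      set n₀ : ℕ := max N ((I.sup id) + 1) with hn₀
      refine ⟨fun n => if n = n₀ then true else z n, ?_, ?_⟩
      · apply hsub
        intro n hn
        have hne : n ≠ n₀ := by
          have := Finset.le_sup (f := id) hn
          simp only [id] at this
          omega
        simp only [if_neg hne]
        exact (hv n hn).2
      · simp only [mem_compl_iff, mem_setOf_eq, not_forall]
        exact ⟨n₀, le_max_left _ _, by simp⟩
    rw [IsMeagre]
    exact residual_of_dense_open hcl.isOpen_compl hdense
  have heq : {z : ZS | {n : ℕ | z n = true}.Infinite}
      = {z : ZS | ¬ {n : ℕ | z n = true}.Infinite}ᶜ := by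
    ext z; simp only [mem_compl_iff, mem_setOf_eq, not_not]
  rw [heq]
  exact key


open TopologicalSpace

/-- A Borel map into a second countable space is continuous on a residual set. -/
lemma exists_residual_continuousOn {α β : Type*} [TopologicalSpace α] [TopologicalSpace β]
    [MeasurableSpace α] [BorelSpace α] [MeasurableSpace β] [BorelSpace β]
    [SecondCountableTopology β] {θ : α → β} (hθ : Measurable θ) :
    ∃ D : Set α, D ∈ residual α ∧ ContinuousOn θ D := by
  obtain ⟨b, bc, -, bb⟩ := TopologicalSpace.exists_countable_basis β
  have hchoice : ∀ t : Set β, ∃ u : Set α, t ∈ b →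
      IsOpen u ∧ (θ ⁻¹' t) =ᵇ u := by
    intro t
    by_cases ht : t ∈ b
    · have htm : MeasurableSet (θ ⁻¹' t) := hθ (bb.isOpen ht).measurableSet
      obtain ⟨u, hu, hequ⟩ := htm.residualEq_isOpen
      exact ⟨u, fun _ => ⟨hu, hequ⟩⟩
    · exact ⟨∅, fun h => absurd h ht⟩
  choose u hu using hchoice
  refine ⟨⋂ t ∈ b, {x | (x ∈ θ ⁻¹' t) = (x ∈ u t)}, ?_, ?_⟩
  · exact (countable_bInter_mem bc).2 fun t ht => (hu t ht).2
  · intro x hx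
    rw [ContinuousWithinAt, Filter.tendsto_def]
    intro W hW
    obtain ⟨t, htb, hxt, htW⟩ := bb.mem_nhds_iff.1 hW
    have hxmem : x ∈ {x | (x ∈ θ ⁻¹' t) = (x ∈ u t)} := by
      have := mem_iInter₂.1 hx t htb
      exact this
    have hxu : x ∈ u t := by
      rw [mem_setOf_eq, eq_iff_iff] at hxmem
      exact hxmem.1 hxt
    rw [mem_nhdsWithin]
    refine ⟨u t, (hu t htb).1, hxu, ?_⟩
    rintro y ⟨hyu, hyD⟩
    have hymem := mem_iInter₂.1 hyD t htb
    rw [mem_setOf_eq, eq_iff_iff] at hymem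
    exact htW (hymem.2 hyu)

/-! ### Baire space instances -/

lemma baire_of_polish (α : Type*) [TopologicalSpace α] [PolishSpace α] : BaireSpace α := by
  infer_instance

/-- Homeomorphism from a continuous involution. -/
def invHomeo {α : Type*} [TopologicalSpace α] (f : α → α) (hf : Function.Involutive f)
    (hc : Continuous f) : α ≃ₜ α :=
  { toEquiv := hf.toPerm f
    continuous_toFun := hc
    continuous_invFun := hc }

lemma invHomeo_coe {α : Type*} [TopologicalSpace α] (f : α → α) (hf : Function.Involutive f)
    (hc : Continuous f) : ⇑(invHomeo f hf hc) = f := rfl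



lemma residual_preimage_om {α β : Type*} [TopologicalSpace α] [TopologicalSpace β]
    {f : α → β} (hc : Continuous f) (ho : IsOpenMap f) {s : Set β}
    (hs : s ∈ residual β) : f ⁻¹' s ∈ residual α :=
  Filter.mem_map.1 (tendsto_residual_of_isOpenMap hc ho hs)

lemma residual_preimage_invol {α : Type*} [TopologicalSpace α] {f : α → α}
    (hf : Function.Involutive f) (hc : Continuous f) {s : Set α}
    (hs : s ∈ residual α) : f ⁻¹' s ∈ residual α := by
  have ho : IsOpenMap f := by
    have := (invHomeo f hf hc).isOpenMap
    rwa [invHomeo_coe] at this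
  exact residual_preimage_om hc ho hs

lemma isOpenMap_invol {α : Type*} [TopologicalSpace α] {f : α → α}
    (hf : Function.Involutive f) (hc : Continuous f) : IsOpenMap f := by
  have := (invHomeo f hf hc).isOpenMap
  rwa [invHomeo_coe] at this



theorem main : ¬ BorelReducible E3 linftyRel := by
  rintro ⟨θ, hθm, hθ⟩
  classical
  haveI : BaireSpace (XS × GS) := inferInstance
  haveI : BaireSpace (XS × GS × ZS) := inferInstance
  have hm : Measurable θ := by
    rw [BorelSpace.measurable_eq (α := XS), BorelSpace.measurable_eq (α := ℕ → ℝ)]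
    exact hθm
  -- a residual set on which θ is continuous
  obtain ⟨D₀, hD₀res, hD₀cont⟩ := exists_residual_continuousOn hm
  -- D₁ : also all single-column finite flips stay in D₀
  set D₁ : Set XS := D₀ ∩ ⋂ c : ℕ, ⋂ K : ℕ, act (single c K) ⁻¹' D₀ with hD₁def
  have hD₁res : D₁ ∈ residual XS := by
    refine Filter.inter_mem hD₀res ?_
    refine (countable_iInter_mem).2 fun c => (countable_iInter_mem).2 fun K => ?_
    exact residual_preimage_invol (act_invol _) (continuous_act _) hD₀res
  -- the sets T m
  set T : ℕ → Set (XS × GS) :=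
    fun m => {pg | ∀ n, |θ pg.1 n - θ (act pg.2 pg.1) n| ≤ (m : ℝ)} with hTdef
  have hTmeas : ∀ m, MeasurableSet (T m) := by
    intro m
    have h1 : ∀ n : ℕ, Measurable fun pg : XS × GS => θ pg.1 n := fun n =>
      (measurable_pi_apply n).comp (hm.comp measurable_fst)
    have h2 : ∀ n : ℕ, Measurable fun pg : XS × GS => θ (act pg.2 pg.1) n := fun n =>
      (measurable_pi_apply n).comp (hm.comp continuous_act_pair.measurable)
    have heqT : T m = ⋂ n, {pg : XS × GS | |θ pg.1 n - θ (act pg.2 pg.1) n| ≤ (m : ℝ)} := by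
      ext pg; simp [hTdef]
    rw [heqT]
    refine MeasurableSet.iInter fun n => ?_
    exact measurableSet_le (((h1 n).sub (h2 n)).abs) measurable_const
  -- T m cover everything
  have hcover : ∀ pg : XS × GS, ∃ m : ℕ, pg ∈ T m := by
    rintro ⟨x, g⟩
    obtain ⟨C, hC⟩ := (hθ x (act g x)).1 (E3_act g x)
    obtain ⟨m, hmC⟩ := exists_nat_ge C
    exact ⟨m, fun n => (hC n).trans hmC⟩
  -- some T m is nonmeager
  have hnonmeager : ∃ m, ¬ IsMeagre (T m) := by
    by_contra h
    push_neg at h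
    have hU : IsMeagre (⋃ m, T m) := isMeagre_iUnion h
    have huniv : (⋃ m, T m) = univ := eq_univ_of_forall fun pg => mem_iUnion.2 (hcover pg)
    rw [huniv, IsMeagre, compl_univ] at hU
    have hdense : Dense (∅ : Set (XS × GS)) := dense_of_mem_residual hU
    obtain ⟨w, hw⟩ := hdense.nonempty
    exact hw
  obtain ⟨m, hm0⟩ := hnonmeager
  obtain ⟨u, uo, une, hcu⟩ := nonmeager_cmgIn ((hTmeas m).baireMeasurableSet) hm0
  -- basic box inside u
  obtain ⟨⟨p, q⟩, hpq⟩ := une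
  obtain ⟨u₁, u₂, h1o, h2o, hp1, hq2, hsubu⟩ := isOpen_prod_iff.1 uo p q hpq
  obtain ⟨I, J, hIJ⟩ := cylX h1o hp1
  obtain ⟨Kf, hKf⟩ := cylG h2o hq2
  set U : Set XS := {x | ∀ k ∈ I, ∀ n ∈ J k, x k n = p k n} with hUdef
  set V : Set GS := {g | ∀ k ∈ Kf, g k = q k} with hVdef
  have hUVu : U ×ˢ V ⊆ u := by
    rintro ⟨x, g⟩ ⟨hx, hg⟩
    exact hsubu ⟨hIJ hx, hKf hg⟩
  have hcUV : CmgIn (T m) (U ×ˢ V) := hcu.subset_open hUVu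
  -- the high column K'
  set K' : ℕ := (I ∪ Kf).sup id + 1 with hK'def
  have hK'Kf : K' ∉ Kf := by
    intro h
    have := Finset.le_sup (f := id) (Finset.mem_union_right I h)
    simp only [id] at this
    omega
  -- the translations Φ c
  set Φ : ℕ → (XS × GS → XS × GS) :=
    fun c pg => (pg.1, fun k => pg.2 k ^^^ single c K' k) with hΦdef
  have hΦinv : ∀ c, Function.Involutive (Φ c) := by
    intro c pg
    simp only [hΦdef]
    refine Prod.ext rfl ?_
    funext k
    exact xor_cancel_right _ _
  have hΦcont : ∀ c, Continuous (Φ c) := by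
    intro c
    refine continuous_fst.prodMk (continuous_pi fun k => ?_)
    exact (continuous_of_discreteTopology (α := ℕ) (f := fun a : ℕ => a ^^^ single c K' k)).comp
      ((continuous_apply k).comp continuous_snd)
  have hΦpre : ∀ c, (Φ c) ⁻¹' (U ×ˢ V) = U ×ˢ V := by
    intro c
    ext ⟨x, g⟩
    simp only [hΦdef, mem_preimage, Set.mem_prod, hVdef, mem_setOf_eq]
    constructor
    · rintro ⟨hx, hg⟩
      refine ⟨hx, fun k hk => ?_⟩
      have hkK : k ≠ K' := fun h => hK'Kf (h ▸ hk)
      have := hg k hk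
      simpa [single, hkK] using this
    · rintro ⟨hx, hg⟩
      refine ⟨hx, fun k hk => ?_⟩
      have hkK : k ≠ K' := fun h => hK'Kf (h ▸ hk)
      simp [single, hkK, hg k hk]
  -- the sets A c, comeager in U ×ˢ V
  set A : ℕ → Set (XS × GS) := fun c => T m ∩ (Φ c) ⁻¹' (T m) with hAdef
  have hcA : ∀ c, CmgIn (A c) (U ×ˢ V) := by
    intro c
    refine hcUV.inter ?_
    exact CmgIn.preimage (hΦcont c) (isOpenMap_invol (hΦinv c) (hΦcont c)) hcUV (hΦpre c)
  -- move into Ω = XS × GS × ZS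
  set π : XS × GS × ZS → XS × GS := fun ω => (ω.1, ω.2.1) with hπdef
  have hπcont : Continuous π := continuous_fst.prodMk (continuous_fst.comp continuous_snd)
  have hπopen : IsOpenMap π := by
    have : π = Prod.map id Prod.fst := rfl
    rw [this]
    exact IsOpenMap.prodMap IsOpenMap.id isOpenMap_fst
  set W : Set (XS × GS × ZS) := U ×ˢ V ×ˢ (univ : Set ZS) with hWdef
  have hπW : π ⁻¹' (U ×ˢ V) = W := by
    ext ⟨x, g, z⟩
    simp [hπdef, hWdef, Set.mem_prod]
  have hcAW : ∀ c, CmgIn (π ⁻¹' (A c)) W := fun c =>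
    CmgIn.preimage hπcont hπopen (hcA c) hπW
  -- the residual conditions
  set e₁ : XS × GS × ZS → XS × GS × ZS := fun ω => (act ω.2.1 ω.1, ω.2.1, ω.2.2) with he₁def
  have he₁inv : Function.Involutive e₁ := by
    intro ω
    simp only [he₁def, act_act]
  have he₁cont : Continuous e₁ := by
    refine Continuous.prodMk ?_ (continuous_snd)
    exact continuous_act_pair.comp (continuous_fst.prodMk (continuous_fst.comp continuous_snd))
  set e₂ : XS × GS × ZS → XS × GS × ZS := fun ω => (actZ K' ω.2.2 ω.1, ω.2) with he₂def
  have he₂inv : Function.Involutive e₂ := by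
    intro ω
    simp only [he₂def, actZ_invol K' ω.2.2 ω.1]
  have he₂cont : Continuous e₂ := by
    refine Continuous.prodMk ?_ (continuous_snd)
    exact (continuous_actZ_pair K').comp
      (continuous_fst.prodMk (continuous_snd.comp continuous_snd))
  have hB : {ω : XS × GS × ZS | act ω.2.1 ω.1 ∈ D₁} ∈ residual _ := by
    have h0 : (Prod.fst ⁻¹' D₁ : Set (XS × GS × ZS)) ∈ residual _ :=
      residual_preimage_om continuous_fst isOpenMap_fst hD₁res
    have := residual_preimage_invol he₁inv he₁cont h0
    exact this
  have hC : {ω : XS × GS × ZS | actZ K' ω.2.2 (act ω.2.1 ω.1) ∈ D₀} ∈ residual _ := by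
    have h0 : (Prod.fst ⁻¹' D₀ : Set (XS × GS × ZS)) ∈ residual _ :=
      residual_preimage_om continuous_fst isOpenMap_fst hD₀res
    have h1 := residual_preimage_invol he₂inv he₂cont h0
    have h2 := residual_preimage_invol he₁inv he₁cont h1
    exact h2
  have hInf : {ω : XS × GS × ZS | {n : ℕ | ω.2.2 n = true}.Infinite} ∈ residual _ := by
    have hcz : Continuous fun ω : XS × GS × ZS => ω.2.2 := continuous_snd.comp continuous_snd
    have hoz : IsOpenMap fun ω : XS × GS × ZS => ω.2.2 :=
      isOpenMap_snd.comp isOpenMap_snd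
    exact residual_preimage_om hcz hoz residual_infinite_support
  -- the master comeager set
  have hMaster : CmgIn ((⋂ c : ℕ, π ⁻¹' (A c)) ∩ ({ω : XS × GS × ZS | act ω.2.1 ω.1 ∈ D₁}
      ∩ ({ω : XS × GS × ZS | actZ K' ω.2.2 (act ω.2.1 ω.1) ∈ D₀}
      ∩ {ω : XS × GS × ZS | {n : ℕ | ω.2.2 n = true}.Infinite}))) W := by
    refine (CmgIn.iInter hcAW).inter ?_
    exact CmgIn.of_residual (Filter.inter_mem hB (Filter.inter_mem hC hInf)) W
  have hWopen : IsOpen W := (isOpen_cylX p I J).prod ((isOpen_cylG q Kf).prod isOpen_univ)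
  have hWne : W.Nonempty := by
    refine ⟨(p, q, fun _ => false), ?_⟩
    exact ⟨fun k _ n _ => rfl, fun k _ => rfl, mem_univ _⟩
  obtain ⟨⟨x, g, z⟩, hmem, -⟩ := hMaster.nonempty hWopen hWne
  obtain ⟨hA', hD₁', hD₀', hInf'⟩ :
      ((x, g, z) ∈ ⋂ c : ℕ, π ⁻¹' (A c)) ∧ act g x ∈ D₁
        ∧ actZ K' z (act g x) ∈ D₀ ∧ {n : ℕ | z n = true}.Infinite := by
    obtain ⟨h1, h2, h3, h4⟩ := hmem
    exact ⟨h1, h2, h3, h4⟩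
  -- notation
  set y₀ : XS := act g x with hy₀def
  set y : XS := actZ K' z y₀ with hydef
  -- the uniform bound
  have hbound : ∀ c : ℕ, ∀ n : ℕ, |θ y₀ n - θ (act (single c K') y₀) n| ≤ 2 * (m : ℝ) := by
    intro c n
    have hc1 : (x, g) ∈ T m := (mem_iInter.1 hA' c).1
    have hc2 : (x, fun k => g k ^^^ single c K' k) ∈ T m := (mem_iInter.1 hA' c).2
    have h1 := hc1 n
    have h2 := hc2 n
    simp only [hTdef, mem_setOf_eq] at h1 h2
    rw [show act (fun k => g k ^^^ single c K' k) x = act (single c K') y₀ from act_xor g _ x]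
      at h2
    calc |θ y₀ n - θ (act (single c K') y₀) n|
        ≤ |θ y₀ n - θ x n| + |θ x n - θ (act (single c K') y₀) n| := abs_sub_le _ _ _
      _ ≤ (m : ℝ) + (m : ℝ) := by
          refine add_le_add ?_ h2
          rw [abs_sub_comm]
          exact h1
      _ = 2 * (m : ℝ) := by ring
  -- approximations
  have happrox : ∀ N : ℕ, ∃ yN : XS, yN ∈ D₀ ∧ (∀ n, |θ y₀ n - θ yN n| ≤ 2 * (m : ℝ)) ∧
      (∀ k n, yN k n = if k = K' then xor (z n && decide (n < N)) (y₀ k n) else y₀ k n) := by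
    intro N
    obtain ⟨c, hcode⟩ := exists_code z N
    refine ⟨act (single c K') y₀, ?_, fun n => hbound c n, ?_⟩
    · have := hD₁'.2
      have h2 : y₀ ∈ act (single c K') ⁻¹' D₀ := by
        have h3 := mem_iInter.1 (mem_iInter.1 this c) K'
        exact h3
      exact h2
    · intro k n
      by_cases hk : k = K'
      · subst hk
        simp [act, single, hcode n]
      · simp [act, single, hk]
  choose yseq hyD₀ hybd hyval using happrox
  -- convergence
  have htend : Filter.Tendsto yseq Filter.atTop (nhdsWithin y D₀) := by
    rw [tendsto_nhdsWithin_iff]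
    constructor
    · rw [tendsto_pi_nhds]
      intro k
      rw [tendsto_pi_nhds]
      intro n
      have hev : (fun N => yseq N k n) =ᶠ[Filter.atTop] (fun _ => y k n) := by
        filter_upwards [Filter.eventually_ge_atTop (n + 1)] with N hN
        rw [hyval N k n]
        by_cases hk : k = K'
        · subst hk
          have hnN : n < N := by omega
          simp [hydef, actZ, hnN]
        · simp [hydef, actZ, hk]
      exact Filter.Tendsto.congr' hev.symm tendsto_const_nhds
    · exact Filter.Eventually.of_forall hyD₀
  have hθtend : Filter.Tendsto (fun N => θ (yseq N)) Filter.atTop (nhds (θ y)) :=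
    Filter.Tendsto.comp (hD₀cont y hD₀') htend
  -- the limit bound
  have hfinal : ∀ n, |θ y₀ n - θ y n| ≤ 2 * (m : ℝ) := by
    intro n
    have h2 : Filter.Tendsto (fun N => θ (yseq N) n) Filter.atTop (nhds (θ y n)) :=
      Filter.Tendsto.comp ((continuous_apply n).tendsto (θ y)) hθtend
    have h1 : Filter.Tendsto (fun N => |θ y₀ n - θ (yseq N) n|) Filter.atTop
        (nhds |θ y₀ n - θ y n|) := (tendsto_const_nhds.sub h2).abs
    exact le_of_tendsto h1 (Filter.Eventually.of_forall fun N => hybd N n)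
  -- contradiction
  have hE3 : E3 y₀ y := (hθ y₀ y).2 ⟨2 * (m : ℝ), hfinal⟩
  have hfin := hE3 K'
  have heq2 : {n : ℕ | y₀ K' n ≠ y K' n} = {n : ℕ | z n = true} := by
    ext n
    simp only [mem_setOf_eq, hydef, actZ, if_pos rfl]
    cases z n <;> cases y₀ K' n <;> simp
  rw [heq2] at hfin
  exact hInf' hfin


end E3L

/-- `E₃` is not Borel reducible to `ℓ∞`. -/
theorem E3_not_reducible_to_linfty : ¬ BorelReducible E3 linftyRel := E3L.main
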